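/- Let n be a positive integer, a = (a_1,...,a_n) and b = (b_1,...,b_n) be n-tuples of complex numbers with b_k ≠ 0 for all k, and p = (p_1,...,p_n) nonnegative real weights with ∑_{i=1}^n p_i = 1. Let γ, Γ ∈ ℂ with Γ ≠ γ and Γ ≠ -γ, and suppose |a_k/conj(b_k) - (γ + Γ)/2| ≤ (1/2)|Γ - γ| for every k ∈ {1,...,n}. Then 0 ≤ (∑_{k=1}^n p_k |a_k|^2)^{1/2}(∑_{k=1}^n p_k |b_k|^2)^{1/2} - | ∑_{k=1}^n p_k a_k b_k | ≤ (∑_{k=1}^n p_k |a_k|^2)^{1/2}(∑_{k=1}^n p_k |b_k|^2)^{1/2} - Re[ ((conj(Γ) + conj(γ))/|Γ + γ|) ∑_{k=1}^n p_k a_k b_k ] ≤ (1/4) · (|Γ - γ|^2/|Γ + γ|) · ∑_{k=1}^n p_k |b_k|^2. -/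

import Mathlib

open Complex Finset

lemma aux_key (x y c : ℂ) (e : ℝ) (hy : y ≠ 0)
    (hd : ‖x / (starRingEnd ℂ) y - c‖ ≤ e) :
    ‖x‖ ^ 2 + ‖c‖ ^ 2 * ‖y‖ ^ 2
      - 2 * ((starRingEnd ℂ) c * x * y).re ≤ e ^ 2 * ‖y‖ ^ 2 := by
  have hy' : (starRingEnd ℂ) y ≠ 0 := by simpa using hy
  have h1 : ‖x - c * (starRingEnd ℂ) y‖ ≤ e * ‖y‖ := by
    have hx : x - c * (starRingEnd ℂ) y
        = (x / (starRingEnd ℂ) y - c) * (starRingEnd ℂ) y := by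
      field_simp
    rw [hx, norm_mul, Complex.norm_conj]
    exact mul_le_mul_of_nonneg_right hd (norm_nonneg y)
  have h2 : ‖x - c * (starRingEnd ℂ) y‖ ^ 2 ≤ (e * ‖y‖) ^ 2 := by
    have h0 : (0:ℝ) ≤ ‖x - c * (starRingEnd ℂ) y‖ := norm_nonneg _
    nlinarith
  rw [Complex.sq_norm, Complex.normSq_sub] at h2
  have e1 : Complex.normSq x = ‖x‖ ^ 2 := (Complex.sq_norm x).symm
  have e2 : Complex.normSq (c * (starRingEnd ℂ) y)
      = ‖c‖ ^ 2 * ‖y‖ ^ 2 := by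
    rw [Complex.normSq_mul, Complex.normSq_conj, Complex.sq_norm, Complex.sq_norm]
  have e3 : (x * (starRingEnd ℂ) (c * (starRingEnd ℂ) y)).re
      = ((starRingEnd ℂ) c * x * y).re := by
    rw [map_mul, Complex.conj_conj]
    congr 1
    ring
  rw [e1, e2, e3] at h2
  nlinarith

theorem stmt_12 (n : ℕ) (hn : 0 < n) (a b : Fin n → ℂ) (p : Fin n → ℝ)
    (hb : ∀ k, b k ≠ 0) (hp : ∀ k, 0 ≤ p k) (hp1 : ∑ i, p i = 1)
    (γ Γ : ℂ) (hne : Γ ≠ γ) (hne' : Γ ≠ -γ)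
    (h : ∀ k, ‖a k / (starRingEnd ℂ) (b k) - (γ + Γ) / 2‖
        ≤ (1 / 2) * ‖Γ - γ‖) :
    0 ≤ (∑ k, p k * ‖a k‖ ^ 2) ^ ((1 : ℝ) / 2)
        * (∑ k, p k * ‖b k‖ ^ 2) ^ ((1 : ℝ) / 2)
        - ‖∑ k, (p k : ℂ) * a k * b k‖
    ∧ (∑ k, p k * ‖a k‖ ^ 2) ^ ((1 : ℝ) / 2)
        * (∑ k, p k * ‖b k‖ ^ 2) ^ ((1 : ℝ) / 2)
        - ‖∑ k, (p k : ℂ) * a k * b k‖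
      ≤ (∑ k, p k * ‖a k‖ ^ 2) ^ ((1 : ℝ) / 2)
        * (∑ k, p k * ‖b k‖ ^ 2) ^ ((1 : ℝ) / 2)
        - ((((starRingEnd ℂ) Γ + (starRingEnd ℂ) γ) / (‖Γ + γ‖ : ℂ))
            * ∑ k, (p k : ℂ) * a k * b k).re
    ∧ (∑ k, p k * ‖a k‖ ^ 2) ^ ((1 : ℝ) / 2)
        * (∑ k, p k * ‖b k‖ ^ 2) ^ ((1 : ℝ) / 2)
        - ((((starRingEnd ℂ) Γ + (starRingEnd ℂ) γ) / (‖Γ + γ‖ : ℂ))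
            * ∑ k, (p k : ℂ) * a k * b k).re
      ≤ (1 / 4) * (‖Γ - γ‖ ^ 2 / ‖Γ + γ‖)
        * ∑ k, p k * ‖b k‖ ^ 2 := by
  set A : ℝ := ∑ k, p k * ‖a k‖ ^ 2 with hA
  set B : ℝ := ∑ k, p k * ‖b k‖ ^ 2 with hB
  set S : ℂ := ∑ k, (p k : ℂ) * a k * b k with hS
  have hA0 : 0 ≤ A := Finset.sum_nonneg fun k _ => mul_nonneg (hp k) (sq_nonneg _)
  have hB0 : 0 ≤ B := Finset.sum_nonneg fun k _ => mul_nonneg (hp k) (sq_nonneg _)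
  have hr0 : 0 < ‖Γ + γ‖ := by
    rw [norm_pos_iff]
    intro hzero
    exact hne' (by linear_combination hzero)
  set r : ℝ := ‖Γ + γ‖ with hr
  set D : ℝ := ‖Γ - γ‖ with hD
  have hD0 : 0 ≤ D := norm_nonneg _
  -- rewrite rpow as sqrt
  rw [← Real.sqrt_eq_rpow, ← Real.sqrt_eq_rpow]
  -- key summed inequality
  have key : A + (r / 2) ^ 2 * B - ((starRingEnd ℂ) (Γ + γ) * S).re ≤ D ^ 2 / 4 * B := by
    have hk : ∀ k ∈ Finset.univ (α := Fin n),
        p k * (‖a k‖ ^ 2 + (r / 2) ^ 2 * ‖b k‖ ^ 2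
          - ((starRingEnd ℂ) (Γ + γ) * ((p k : ℂ) * a k * b k) / (p k : ℂ)).re * 0
          - 2 * ((starRingEnd ℂ) ((γ + Γ) / 2) * a k * b k).re)
        ≤ p k * (D ^ 2 / 4 * ‖b k‖ ^ 2) := by
      intro k _
      apply mul_le_mul_of_nonneg_left _ (hp k)
      have := aux_key (a k) (b k) ((γ + Γ) / 2) ((1 / 2) * D) (hb k) (h k)
      have habs : ‖(γ + Γ) / 2‖ = r / 2 := by
        rw [norm_div, Complex.norm_two, hr, add_comm γ Γ]
      rw [habs] at this
      simp only [mul_zero, sub_zero]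
      nlinarith [this]
    have hsum := Finset.sum_le_sum hk
    simp only [mul_zero, sub_zero] at hsum
    -- rewrite both sides
    have lhs_eq : ∑ k, p k * (‖a k‖ ^ 2 + (r / 2) ^ 2 * ‖b k‖ ^ 2
          - 2 * ((starRingEnd ℂ) ((γ + Γ) / 2) * a k * b k).re)
        = A + (r / 2) ^ 2 * B - ((starRingEnd ℂ) (Γ + γ) * S).re := by
      have hre : ((starRingEnd ℂ) (Γ + γ) * S).re
          = ∑ k, p k * (2 * ((starRingEnd ℂ) ((γ + Γ) / 2) * a k * b k).re) := by
        rw [hS, Finset.mul_sum, Complex.re_sum]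
        refine Finset.sum_congr rfl fun k _ => ?_
        have : (starRingEnd ℂ) (Γ + γ) * ((p k : ℂ) * a k * b k)
            = (p k : ℂ) * (2 * ((starRingEnd ℂ) ((γ + Γ) / 2) * a k * b k)) := by
          rw [map_div₀, map_ofNat]
          push_cast
          ring
        rw [this, Complex.re_ofReal_mul, Complex.mul_re]
        norm_num
      rw [hre, hA, hB, Finset.mul_sum, ← Finset.sum_add_distrib, ← Finset.sum_sub_distrib]
      refine Finset.sum_congr rfl fun k _ => ?_
      ring
    have rhs_eq : ∑ k, p k * (D ^ 2 / 4 * ‖b k‖ ^ 2) = D ^ 2 / 4 * B := by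
      rw [hB, Finset.mul_sum]
      refine Finset.sum_congr rfl fun k _ => ?_
      ring
    rw [lhs_eq, rhs_eq] at hsum
    exact hsum
  -- Re(uS) = Re(conj(Γ+γ) S) / r
  have hu : ((((starRingEnd ℂ) Γ + (starRingEnd ℂ) γ) / (r : ℂ)) * S).re
      = ((starRingEnd ℂ) (Γ + γ) * S).re / r := by
    have : (((starRingEnd ℂ) Γ + (starRingEnd ℂ) γ) / (r : ℂ)) * S
        = ((starRingEnd ℂ) (Γ + γ) * S) / (r : ℂ) := by
      rw [map_add]; ring
    rw [this, Complex.div_ofReal_re]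
  -- Cauchy-Schwarz: |S| ≤ √A * √B
  have cs : ‖S‖ ≤ Real.sqrt A * Real.sqrt B := by
    have h1 : ‖S‖ ≤ ∑ k, p k * (‖a k‖ * ‖b k‖) := by
      refine (norm_sum_le _ _).trans_eq ?_
      refine Finset.sum_congr rfl fun k _ => ?_
      rw [norm_mul, norm_mul, Complex.norm_real, Real.norm_eq_abs, _root_.abs_of_nonneg (hp k)]
      ring
    have h2 : ∑ k, p k * (‖a k‖ * ‖b k‖)
        ≤ Real.sqrt A * Real.sqrt B := by
      have := Real.sum_mul_le_sqrt_mul_sqrt Finset.univ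
        (fun k => Real.sqrt (p k) * ‖a k‖)
        (fun k => Real.sqrt (p k) * ‖b k‖)
      have e1 : ∀ k : Fin n, (Real.sqrt (p k) * ‖a k‖)
          * (Real.sqrt (p k) * ‖b k‖)
          = p k * (‖a k‖ * ‖b k‖) := by
        intro k
        rw [show (Real.sqrt (p k) * ‖a k‖) * (Real.sqrt (p k) * ‖b k‖)
          = (Real.sqrt (p k) * Real.sqrt (p k)) * (‖a k‖ * ‖b k‖) by ring,
          Real.mul_self_sqrt (hp k)]
      have e2 : ∀ (f : Fin n → ℂ) (k : Fin n),
          (Real.sqrt (p k) * ‖f k‖) ^ 2 = p k * ‖f k‖ ^ 2 := by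
        intro f k
        rw [mul_pow, Real.sq_sqrt (hp k)]
      simp only [e1, e2] at this
      exact this
    exact h1.trans h2
  have hre_le : ((((starRingEnd ℂ) Γ + (starRingEnd ℂ) γ) / (r : ℂ)) * S).re
      ≤ ‖S‖ := by
    refine (Complex.re_le_norm _).trans ?_
    rw [norm_mul, norm_div, ← map_add, Complex.norm_conj, Complex.norm_real, Real.norm_eq_abs,
      _root_.abs_of_pos hr0, div_self (ne_of_gt hr0), one_mul]
  refine ⟨by linarith, by linarith, ?_⟩
  -- Part 3
  rw [hu]
  -- AM-GM: √A √B ≤ A/r + r B /4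
  have amgm : Real.sqrt A * Real.sqrt B ≤ A / r + r * B / 4 := by
    have hu2 : Real.sqrt A ^ 2 = A := Real.sq_sqrt hA0
    have hv2 : Real.sqrt B ^ 2 = B := Real.sq_sqrt hB0
    have h0 : 0 ≤ (Real.sqrt A - (r / 2) * Real.sqrt B) ^ 2 := sq_nonneg _
    have : Real.sqrt A * Real.sqrt B * r ≤ A + r ^ 2 * B / 4 := by nlinarith
    rw [div_add_div _ _ (ne_of_gt hr0) (by norm_num), le_div_iff₀ (mul_pos hr0 (by norm_num))]
    nlinarith [this]
  have h3 : (A + (r / 2) ^ 2 * B - D ^ 2 / 4 * B) / r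
      ≤ ((starRingEnd ℂ) (Γ + γ) * S).re / r :=
    by gcongr <;> linarith
  calc Real.sqrt A * Real.sqrt B - ((starRingEnd ℂ) (Γ + γ) * S).re / r
      ≤ (A / r + r * B / 4) - (A + (r / 2) ^ 2 * B - D ^ 2 / 4 * B) / r := by
        linarith [amgm, h3]
    _ = 1 / 4 * (D ^ 2 / r) * B := by
        field_simp
        ring
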